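/- Let A ∈ L(H) have closed range with Moore–Penrose inverse A⁺, and let X, Y ∈ L(K,H) with R(X) ⊆ R(A) and R(Y) ⊆ R(A*). Assume I − Y* A⁺ X is invertible in L(K), and set B = A⁺ + A⁺ X (I − Y* A⁺ X)⁻¹ Y* A⁺. Then (A − XY*) B = A A⁺ and B (A − XY*) = A⁺ A. -/

import Mathlib

open ContinuousLinearMap

/-- Let `A ∈ L(H)` have closed range with Moore–Penrose inverse `A⁺` (denoted `Ap`), and
`X, Y ∈ L(K,H)` with `R(X) ⊆ R(A)`, `R(Y) ⊆ R(A*)`. Assume `I − Y* A⁺ X` is invertible in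
`L(K)` with inverse `W`, and set `B = A⁺ + A⁺ X (I − Y* A⁺ X)⁻¹ Y* A⁺`. Then
`(A − XY*) B = A A⁺` and `B (A − XY*) = A⁺ A`. -/
theorem SMW_partial_isometries
    {H K : Type*}
    [NormedAddCommGroup H] [InnerProductSpace ℂ H] [CompleteSpace H]
    [NormedAddCommGroup K] [InnerProductSpace ℂ K] [CompleteSpace K]
    (A Ap : H →L[ℂ] H)
    (hA : IsClosed (Set.range A))
    (h1 : A ∘L Ap ∘L A = A)
    (h2 : Ap ∘L A ∘L Ap = Ap)
    (h3 : ContinuousLinearMap.adjoint (A ∘L Ap) = A ∘L Ap)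
    (h4 : ContinuousLinearMap.adjoint (Ap ∘L A) = Ap ∘L A)
    (X Y : K →L[ℂ] H)
    (hX : Set.range X ⊆ Set.range A)
    (hY : Set.range Y ⊆ Set.range (ContinuousLinearMap.adjoint A))
    (W : K →L[ℂ] K)
    (hW1 : (1 - (ContinuousLinearMap.adjoint Y) ∘L Ap ∘L X) ∘L W = 1)
    (hW2 : W ∘L (1 - (ContinuousLinearMap.adjoint Y) ∘L Ap ∘L X) = 1) :
    (A - X ∘L ContinuousLinearMap.adjoint Y) ∘L
        (Ap + Ap ∘L X ∘L W ∘L (ContinuousLinearMap.adjoint Y) ∘L Ap) = A ∘L Ap ∧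
      (Ap + Ap ∘L X ∘L W ∘L (ContinuousLinearMap.adjoint Y) ∘L Ap) ∘L
        (A - X ∘L ContinuousLinearMap.adjoint Y) = Ap ∘L A := by
  -- Notation
  set Yd := ContinuousLinearMap.adjoint Y with hYd
  -- Fact 1: A A⁺ X = X (pointwise), since R(X) ⊆ R(A)
  have f1 : ∀ k, A (Ap (X k)) = X k := by
    intro k
    obtain ⟨v, hv⟩ := hX (Set.mem_range_self k)
    have := congrArg (fun T => T v) h1
    simp only [ContinuousLinearMap.comp_apply] at this
    rw [← hv, this]
  -- Fact 2: A⁺ A A* = A*, hence Y* A⁺ A = Y* (pointwise)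
  have hadj : (Ap ∘L A) ∘L ContinuousLinearMap.adjoint A = ContinuousLinearMap.adjoint A := by
    apply ContinuousLinearMap.adjoint.injective
    rw [ContinuousLinearMap.adjoint_comp, h4, ContinuousLinearMap.adjoint_adjoint]
    exact h1
  have f2 : ∀ h, Yd (Ap (A h)) = Yd h := by
    intro h
    have hQY : ∀ k, Ap (A (Y k)) = Y k := by
      intro k
      obtain ⟨v, hv⟩ := hY (Set.mem_range_self k)
      have := congrArg (fun T => T v) hadj
      simp only [ContinuousLinearMap.comp_apply] at this
      rw [← hv, this]
    -- Y* (A⁺ A) = Y* since (A⁺A)* = A⁺A and (A⁺A) Y = Y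
    have : ∀ k, inner ℂ (Yd (Ap (A h))) k = (inner ℂ (Yd h) k : ℂ) := by
      intro k
      simp only [hYd, ContinuousLinearMap.adjoint_inner_left]
      calc (inner ℂ (Ap (A h)) (Y k) : ℂ)
          = inner ℂ ((Ap ∘L A) h) (Y k) := by rw [ContinuousLinearMap.comp_apply]
        _ = inner ℂ (ContinuousLinearMap.adjoint (Ap ∘L A) h) (Y k) := by rw [h4]
        _ = inner ℂ h ((Ap ∘L A) (Y k)) := ContinuousLinearMap.adjoint_inner_left _ _ _
        _ = inner ℂ h (Y k) := by rw [ContinuousLinearMap.comp_apply, hQY]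
    exact ext_inner_right ℂ this
  -- W relations pointwise
  have w1 : ∀ k, Yd (Ap (X (W k))) = W k - k := by
    intro k
    have := congrArg (fun T => T k) hW1
    simp only [ContinuousLinearMap.comp_apply, ContinuousLinearMap.sub_apply,
      ContinuousLinearMap.one_apply] at this
    linear_combination (norm := abel) -this
  have w2 : ∀ k, W (k - Yd (Ap (X k))) = k := by
    intro k
    have := congrArg (fun T => T k) hW2
    simp only [ContinuousLinearMap.comp_apply, ContinuousLinearMap.sub_apply,
      ContinuousLinearMap.one_apply] at this
    exact this
  constructor
  · ext x
    simp only [ContinuousLinearMap.comp_apply, ContinuousLinearMap.sub_apply,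
      ContinuousLinearMap.add_apply, map_add, map_sub]
    rw [f1, w1]
    simp only [map_sub]
    have key : ∀ (a b c : H), a - b + (c - (c - b)) = a := by
      intro a b c; abel
    exact key _ _ _
  · ext x
    simp only [ContinuousLinearMap.comp_apply, ContinuousLinearMap.sub_apply,
      ContinuousLinearMap.add_apply, map_add, map_sub]
    rw [f2]
    have h5 : W (Yd x) - W (Yd (Ap (X (Yd x)))) = Yd x := by
      rw [← map_sub]; exact w2 (Yd x)
    have h6 : Ap (X (W (Yd x))) - Ap (X (W (Yd (Ap (X (Yd x)))))) = Ap (X (Yd x)) := by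
      rw [← map_sub, ← map_sub, h5]
    have key : ∀ (a b c d : H), b - d = c → a + b - (c + d) = a := by
      intro a b c d h; rw [← h]; abel
    exact key _ _ _ _ h6
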